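/- Let G be a graph on n ≥ 2 vertices with a universal vertex u. Then π_t(G, u) = n + 2t − 2, i.e., every configuration of size n + 2t − 2 on G is t-fold u-solvable, and some configuration of size n + 2t − 3 is not. -/

import Mathlib

open SimpleGraph

open Classical in
/-- A single pebbling step: remove two pebbles from `u` and add one to an adjacent `v`. -/
def PebStep {V : Type*} (G : SimpleGraph V) (C C' : V → ℕ) : Prop :=
  ∃ u v, G.Adj u v ∧ 2 ≤ C u ∧
    ∀ w, C' w = if w = u then C w - 2 else if w = v then C w + 1 else C w

/-- `C` is `t`-fold `r`-solvable: some sequence of pebbling steps places `t` pebbles on `r`. -/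
def Solvable {V : Type*} (G : SimpleGraph V) (C : V → ℕ) (r : V) (t : ℕ) : Prop :=
  ∃ C', Relation.ReflTransGen (PebStep G) C C' ∧ t ≤ C' r

/-- The size of a configuration: total number of pebbles. -/
def confSize {V : Type*} [Fintype V] (C : V → ℕ) : ℕ := ∑ v, C v

/-- The potential of a configuration: the number of pairwise disjoint pairs of
pebbles sitting on common vertices, `∑ v, ⌊C v / 2⌋`. -/
def potential {V : Type*} [Fintype V] (C : V → ℕ) : ℕ := ∑ v, C v / 2

/-- Number of vertices with no pebbles. -/
noncomputable def numZeros {V : Type*} [Fintype V] (C : V → ℕ) : ℕ :=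
  {v : V | C v = 0}.ncard

/-- The `t`-pebbling number of `G` with root `r`. -/
noncomputable def piT {V : Type*} [Fintype V] (G : SimpleGraph V) (r : V) (t : ℕ) : ℕ :=
  sInf {m | ∀ C : V → ℕ, m ≤ confSize C → Solvable G C r t}

/-- The `t`-pebbling number of `G`. -/
noncomputable def piTG {V : Type*} [Fintype V] (G : SimpleGraph V) (t : ℕ) : ℕ :=
  Finset.univ.sup fun r => piT G r t

/-- `G` is `k`-connected: more than `k` vertices and deleting fewer than `k`
vertices leaves a connected graph. -/
def KConnected {V : Type*} [Fintype V] (G : SimpleGraph V) (k : ℕ) : Prop :=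
  k < Fintype.card V ∧
    ∀ S : Set V, S.ncard < k → ((⊤ : G.Subgraph).deleteVerts S).coe.Connected

/-- `u` is a universal vertex: adjacent to every other vertex. -/
def IsUniversal {V : Type*} (G : SimpleGraph V) (u : V) : Prop :=
  ∀ v, v ≠ u → G.Adj u v

section Aux
variable {V : Type*} [Fintype V] {G : SimpleGraph V} {u : V}

open Classical Finset in
noncomputable def phi (u : V) (C : V → ℕ) : ℕ :=
  C u + ∑ v ∈ Finset.univ.erase u, C v / 2

open Classical Finset in
lemma phi_step_le {C C' : V → ℕ} (h : PebStep G C C') : phi u C' ≤ phi u C := by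
  classical
  obtain ⟨a, b, hadj, h2, hC'⟩ := h
  have hab : a ≠ b := G.ne_of_adj hadj
  by_cases hau : a = u
  · subst hau
    have hbu : b ≠ a := fun h => hab h.symm
    have hb : b ∈ univ.erase a := mem_erase.2 ⟨hbu, mem_univ _⟩
    have hT : ∑ v ∈ (univ.erase a).erase b, C' v / 2
        = ∑ v ∈ (univ.erase a).erase b, C v / 2 := by
      refine Finset.sum_congr rfl fun v hv => ?_
      obtain ⟨hvb, hva⟩ : v ≠ b ∧ v ≠ a := by simpa using hv
      rw [hC' v, if_neg hva, if_neg hvb]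
    have hCa : C' a = C a - 2 := by rw [hC' a, if_pos rfl]
    have hCb : C' b = C b + 1 := by rw [hC' b, if_neg hbu, if_pos rfl]
    unfold phi
    rw [← Finset.add_sum_erase _ _ hb, ← Finset.add_sum_erase _ (fun v => C v / 2) hb,
      hT, hCa, hCb]
    omega
  · have ha : a ∈ univ.erase u := mem_erase.2 ⟨hau, mem_univ _⟩
    have hCa : C' a = C a - 2 := by rw [hC' a, if_pos rfl]
    by_cases hbu : b = u
    · subst hbu
      have hCu : C' b = C b + 1 := by rw [hC' b, if_neg (fun h => hab h.symm), if_pos rfl]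
      have hT : ∑ v ∈ (univ.erase b).erase a, C' v / 2
          = ∑ v ∈ (univ.erase b).erase a, C v / 2 := by
        refine Finset.sum_congr rfl fun v hv => ?_
        obtain ⟨hva, hvb⟩ : v ≠ a ∧ v ≠ b := by simpa using hv
        rw [hC' v, if_neg hva, if_neg hvb]
      unfold phi
      rw [← Finset.add_sum_erase _ _ ha, ← Finset.add_sum_erase _ (fun v => C v / 2) ha,
        hT, hCa, hCu]
      omega
    · have hb : b ∈ (univ.erase u).erase a :=
        mem_erase.2 ⟨Ne.symm hab, mem_erase.2 ⟨hbu, mem_univ _⟩⟩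
      have hCb : C' b = C b + 1 := by rw [hC' b, if_neg (Ne.symm hab), if_pos rfl]
      have hT : ∑ v ∈ ((univ.erase u).erase a).erase b, C' v / 2
          = ∑ v ∈ ((univ.erase u).erase a).erase b, C v / 2 := by
        refine Finset.sum_congr rfl fun v hv => ?_
        obtain ⟨hvb, hva, hvu⟩ : v ≠ b ∧ v ≠ a ∧ v ≠ u := by simpa [and_assoc] using hv
        rw [hC' v, if_neg hva, if_neg hvb]
      have hCuu : C' u = C u := by
        rw [hC' u, if_neg (fun h => hau h.symm), if_neg (fun h => hbu h.symm)]
      unfold phi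
      rw [← Finset.add_sum_erase _ _ ha, ← Finset.add_sum_erase _ (fun v => C v / 2) ha,
        ← Finset.add_sum_erase _ _ hb, ← Finset.add_sum_erase _ (fun v => C v / 2) hb,
        hT, hCa, hCb, hCuu]
      omega

lemma phi_rtg {C C' : V → ℕ} (h : Relation.ReflTransGen (PebStep G) C C') :
    phi u C' ≤ phi u C := by
  induction h with
  | refl => exact le_rfl
  | tail hab hbc ih => exact le_trans (phi_step_le hbc) ih

open Classical Finset in
lemma solvable_of_phi (hu : _root_.IsUniversal G u) (t : ℕ) (n : ℕ) :
    ∀ C : V → ℕ, confSize C ≤ n → t ≤ phi u C → Solvable G C u t := by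
  classical
  induction n with
  | zero =>
    intro C hsize hphi
    refine ⟨C, Relation.ReflTransGen.refl, ?_⟩
    have : phi u C ≤ confSize C := by
      unfold phi confSize
      rw [← Finset.add_sum_erase _ C (mem_univ u)]
      gcongr with v hv
      omega
    omega
  | succ n ih =>
    intro C hsize hphi
    by_cases hCu : t ≤ C u
    · exact ⟨C, Relation.ReflTransGen.refl, hCu⟩
    · have hpos : 0 < ∑ v ∈ univ.erase u, C v / 2 := by
        unfold phi at hphi; omega
      obtain ⟨v, hv, hv2⟩ : ∃ v ∈ univ.erase u, 0 < C v / 2 := by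
        by_contra hc
        push_neg at hc
        have : ∑ v ∈ univ.erase u, C v / 2 = 0 :=
          Finset.sum_eq_zero fun v hvm => Nat.le_zero.1 (hc v hvm)
        omega
      have hvu : v ≠ u := (mem_erase.1 hv).1
      have hv2' : 2 ≤ C v := by omega
      set C' : V → ℕ := fun w => if w = v then C w - 2 else if w = u then C w + 1 else C w
        with hC'def
      have hstep : PebStep G C C' := by
        refine ⟨v, u, (hu v hvu).symm, hv2', fun w => ?_⟩
        by_cases h1 : w = v <;> by_cases h2 : w = u <;> simp [hC'def, h1, h2]
      have hC'v : C' v = C v - 2 := by simp [hC'def]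
      have hC'u : C' u = C u + 1 := by simp [hC'def, Ne.symm hvu]
      have hT : ∀ w, w ≠ v → w ≠ u → C' w = C w := by
        intro w h1 h2; simp [hC'def, h1, h2]
      have hsum : ∀ f : ℕ → ℕ, ∑ w ∈ (univ.erase u).erase v, f (C' w)
          = ∑ w ∈ (univ.erase u).erase v, f (C w) := by
        intro f
        refine Finset.sum_congr rfl fun w hw => ?_
        obtain ⟨hwv, hwu⟩ : w ≠ v ∧ w ≠ u := by simpa using hw
        rw [hT w hwv hwu]
      have hsize' : confSize C' + 1 = confSize C := by
        unfold confSize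
        rw [← Finset.add_sum_erase _ C (mem_univ u), ← Finset.add_sum_erase _ C' (mem_univ u),
          ← Finset.add_sum_erase _ C hv, ← Finset.add_sum_erase _ C' hv,
          hsum (fun x => x), hC'v, hC'u]
        omega
      have hphi' : t ≤ phi u C' := by
        unfold phi at hphi ⊢
        rw [← Finset.add_sum_erase _ (fun w => C w / 2) hv,
          ← Finset.add_sum_erase _ (fun w => C' w / 2) hv,
          hsum (fun x => x / 2), hC'v, hC'u] at *
        omega
      obtain ⟨C'', hRT, hle⟩ := ih C' (by omega) hphi'
      exact ⟨C'', Relation.ReflTransGen.head hstep hRT, hle⟩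

end Aux

theorem piT_universal_root {V : Type*} [Fintype V] (G : SimpleGraph V)
    (u : V) (hu : _root_.IsUniversal G u) (t : ℕ) (ht : 1 ≤ t)
    (hn : 2 ≤ Fintype.card V) :
    (∀ C : V → ℕ, confSize C = Fintype.card V + 2 * t - 2 → Solvable G C u t) ∧
    (∃ C : V → ℕ, confSize C = Fintype.card V + 2 * t - 3 ∧ ¬ Solvable G C u t) ∧
    piT G u t = Fintype.card V + 2 * t - 2 := by

  classical
  set n := Fintype.card V with hncard
  have upper : ∀ C : V → ℕ, n + 2 * t - 2 ≤ confSize C → Solvable G C u t := by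
    intro C hsize
    refine solvable_of_phi hu t (confSize C) C le_rfl ?_
    have hcard : (Finset.univ.erase u).card = n - 1 := by
      rw [Finset.card_erase_of_mem (Finset.mem_univ u), Finset.card_univ]
    have hS : ∑ v ∈ Finset.univ.erase u, C v
        ≤ 2 * (∑ v ∈ Finset.univ.erase u, C v / 2) + (n - 1) := by
      calc ∑ v ∈ Finset.univ.erase u, C v
          ≤ ∑ v ∈ Finset.univ.erase u, (2 * (C v / 2) + 1) :=
            Finset.sum_le_sum (fun v _ => by omega)
        _ = 2 * (∑ v ∈ Finset.univ.erase u, C v / 2) + (n - 1) := by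
            rw [Finset.sum_add_distrib, Finset.sum_const, ← Finset.mul_sum, hcard,
              smul_eq_mul, mul_one]
    have hsplit : confSize C = C u + ∑ v ∈ Finset.univ.erase u, C v :=
      (Finset.add_sum_erase _ C (Finset.mem_univ u)).symm
    unfold phi
    omega
  obtain ⟨v, hvu⟩ : ∃ v, v ≠ u := Fintype.exists_ne_of_one_lt_card (by omega) u
  set C0 : V → ℕ := fun w => if w = v then 2 * t - 1 else if w = u then 0 else 1 with hC0
  have hv : v ∈ Finset.univ.erase u := Finset.mem_erase.2 ⟨hvu, Finset.mem_univ _⟩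
  have hcard2 : ((Finset.univ.erase u).erase v).card = n - 2 := by
    rw [Finset.card_erase_of_mem hv, Finset.card_erase_of_mem (Finset.mem_univ u),
      Finset.card_univ]
    omega
  have hrest : ∀ f : ℕ → ℕ, ∑ w ∈ (Finset.univ.erase u).erase v, f (C0 w)
      = ((Finset.univ.erase u).erase v).card * f 1 := by
    intro f
    rw [Finset.sum_congr rfl (fun w hw => ?_), Finset.sum_const, smul_eq_mul]
    obtain ⟨hwv, hwu⟩ : w ≠ v ∧ w ≠ u := by simpa using hw
    simp [hC0, hwv, hwu]
  have hC0v : C0 v = 2 * t - 1 := by simp [hC0]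
  have hC0u : C0 u = 0 := by simp [hC0, Ne.symm hvu]
  have hsize0 : confSize C0 = n + 2 * t - 3 := by
    unfold confSize
    rw [← Finset.add_sum_erase _ C0 (Finset.mem_univ u), ← Finset.add_sum_erase _ C0 hv,
      hrest (fun x => x), hC0v, hC0u, hcard2]
    omega
  have hphi0 : phi u C0 = t - 1 := by
    unfold phi
    rw [← Finset.add_sum_erase _ (fun w => C0 w / 2) hv, hrest (fun x => x / 2),
      hC0v, hC0u]
    omega
  have hnot : ¬ Solvable G C0 u t := by
    rintro ⟨C', hRT, hle⟩
    have h1 : phi u C' ≤ phi u C0 := phi_rtg hRT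
    have h2 : C' u ≤ phi u C' := Nat.le_add_right _ _
    omega
  refine ⟨fun C hC => upper C (by omega), ⟨C0, hsize0, hnot⟩, ?_⟩
  have hmem : (n + 2 * t - 2) ∈ {m | ∀ C : V → ℕ, m ≤ confSize C → Solvable G C u t} :=
    fun C h => upper C h
  refine le_antisymm (Nat.sInf_le hmem) (le_csInf ⟨_, hmem⟩ ?_)
  intro m hm
  by_contra hlt
  push_neg at hlt
  exact hnot (hm C0 (by omega))
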